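/- Let k be a positive integer with gcd(k, 6) = 1, and suppose the set of T-cycles contained in D_k is finite, with cardinality α(k). For n ≥ 1 let ν_n(k) be the number of primitive 0–1 vectors v of length n such that x(v) has denominator k in lowest terms. Then α(k) = ∑_{n=1}^∞ ν_n(k)/n, where each term ν_n(k)/n is a nonnegative integer and only finitely many terms are nonzero (Proposition 3.1, claim 4). -/

import Mathlib

/-- The `3x+1` function on rationals: `T x = x/2` if the numerator of `x` is even,
and `T x = (3x+1)/2` if the numerator of `x` is odd. -/
noncomputable def T (x : ℚ) : ℚ := if Even x.num then x / 2 else (3 * x + 1) / 2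

/-- `ρ(v) = ∑_{j=0}^{n-1} v_j ⬝ 3^{v_{j+1} + ⋯ + v_{n-1}} ⬝ 2^j`, for a `0-1` vector
encoded as a list. -/
def rhoL : List ℕ → ℕ
  | [] => 0
  | a :: t => a * 3 ^ t.sum + 2 * rhoL t

/-- `x(v) = ρ(v) / (2^n - 3^{ω(v)})`, where `n` is the length of `v` and
`ω(v)` is the sum of its entries. -/
noncomputable def xL (l : List ℕ) : ℚ :=
  (rhoL l : ℚ) / ((2 : ℚ) ^ l.length - (3 : ℚ) ^ l.sum)

/-- A vector is primitive if its cyclic rotations are pairwise distinct, i.e. no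
nontrivial rotation fixes it. -/
def Primitive (l : List ℕ) : Prop := ∀ m, 1 ≤ m → m < l.length → l.rotate m ≠ l

/-- The set of `T`-cycles contained in `D_k`. -/
def cyclesIn (k : ℕ) : Set (Set ℚ) :=
  {c | ∃ x : ℚ, ∃ n : ℕ, 1 ≤ n ∧ x.den = k ∧ T^[n] x = x ∧
    c = {y | ∃ j : ℕ, T^[j] x = y}}

/-- `ν_n(k)`: the number of primitive `0-1` vectors of length `n` such that `x(v)`
has denominator `k` in lowest terms. -/
noncomputable def nu (n k : ℕ) : ℕ :=
  {l : List ℕ | l.length = n ∧ (∀ a ∈ l, a = 0 ∨ a = 1) ∧ Primitive l ∧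
    (xL l).den = k}.ncard

section Aux

/-- integer denominator -/
def DL (l : List ℕ) : ℤ := 2 ^ l.length - 3 ^ l.sum

lemma DL_odd (l : List ℕ) (h : 1 ≤ l.length) : Odd (DL l) := by
  have h2 : Even ((2:ℤ) ^ l.length) := Int.even_pow.mpr ⟨even_two, by omega⟩
  have h3 : Odd ((3:ℤ) ^ l.sum) := Odd.pow (by decide)
  exact h2.sub_odd h3

lemma DL_ne_zero (l : List ℕ) (h : 1 ≤ l.length) : DL l ≠ 0 := by
  intro h0
  have := DL_odd l h
  rw [h0] at this
  exact (Int.not_odd_iff_even.mpr Even.zero) this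

lemma xL_eq (l : List ℕ) : xL l = (rhoL l : ℚ) / (DL l : ℚ) := by
  unfold xL DL
  norm_cast

lemma DLQ_ne_zero (l : List ℕ) (h : 1 ≤ l.length) : ((DL l : ℚ)) ≠ 0 := by
  exact_mod_cast DL_ne_zero l h

lemma num_mul_DL (l : List ℕ) (h : 1 ≤ l.length) :
    (xL l).num * DL l = (rhoL l : ℤ) * ((xL l).den : ℤ) := by
  have hD := DLQ_ne_zero l h
  have hden : ((xL l).den : ℚ) ≠ 0 := by exact_mod_cast (xL l).den_nz
  have h1 : ((xL l).num : ℚ) / ((xL l).den : ℚ) = (rhoL l : ℚ) / (DL l : ℚ) := by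
    rw [Rat.num_div_den, xL_eq l]
  have h2 : ((xL l).num : ℚ) * (DL l : ℚ) = (rhoL l : ℚ) * ((xL l).den : ℚ) := by
    field_simp at h1
    linarith [h1]
  exact_mod_cast h2

lemma den_dvd_DL (l : List ℕ) : ((xL l).den : ℤ) ∣ DL l := by
  have : xL l = Rat.divInt (rhoL l) (DL l) := by rw [xL_eq, Rat.divInt_eq_div]; norm_cast
  rw [this]
  exact Rat.den_dvd _ _

lemma den_odd (l : List ℕ) (h : 1 ≤ l.length) : ¬ (2:ℤ) ∣ ((xL l).den : ℤ) := by
  intro hdvd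
  have h2 : (2:ℤ) ∣ DL l := hdvd.trans (den_dvd_DL l)
  have := DL_odd l h
  rw [← Int.not_even_iff_odd] at this
  exact this (even_iff_two_dvd.mpr h2)

lemma even_num_xL (a : ℕ) (t : List ℕ) : Even (xL (a :: t)).num ↔ Even a := by
  have hlen : 1 ≤ (a :: t).length := by simp
  have hmul := num_mul_DL (a :: t) hlen
  have hDodd : ¬ Even (DL (a :: t)) := Int.not_even_iff_odd.mpr (DL_odd _ hlen)
  have hdenodd : ¬ Even (((xL (a :: t)).den : ℤ)) := by
    intro he
    exact den_odd _ hlen he.two_dvd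
  have h3 : ¬ Even ((3:ℤ) ^ t.sum) := Int.not_even_iff_odd.mpr (Odd.pow (by decide))
  have hrho : (rhoL (a :: t) : ℤ) = (a : ℤ) * 3 ^ t.sum + 2 * (rhoL t : ℤ) := by
    show ((a * 3 ^ t.sum + 2 * rhoL t : ℕ) : ℤ) = _
    push_cast; ring
  have h2r : Even ((2:ℤ) * (rhoL t : ℤ)) := even_two_mul _
  calc Even (xL (a :: t)).num
      ↔ Even ((xL (a :: t)).num * DL (a :: t)) := by rw [Int.even_mul]; tauto
    _ ↔ Even ((rhoL (a :: t) : ℤ) * ((xL (a :: t)).den : ℤ)) := by rw [hmul]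
    _ ↔ Even ((rhoL (a :: t) : ℤ)) := by rw [Int.even_mul]; tauto
    _ ↔ Even ((a : ℤ) * 3 ^ t.sum) := by
        rw [hrho, Int.even_add]
        constructor
        · intro h; exact h.mpr h2r
        · intro h; exact iff_of_true h h2r
    _ ↔ Even ((a : ℤ)) := by rw [Int.even_mul]; tauto
    _ ↔ Even a := by exact_mod_cast Int.even_coe_nat a

lemma T_apply_even (x : ℚ) (h : Even x.num) : T x = x / 2 := if_pos h

lemma T_apply_odd (x : ℚ) (h : ¬ Even x.num) : T x = (3 * x + 1) / 2 := if_neg h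

lemma rhoL_append (t : List ℕ) (a : ℕ) :
    rhoL (t ++ [a]) = 3 ^ a * rhoL t + a * 2 ^ t.length := by
  induction t with
  | nil => simp [rhoL]
  | cons b t ih =>
    have hs : (t ++ [a]).sum = t.sum + a := by simp
    simp only [List.cons_append, rhoL, List.append_eq, hs, List.length_cons, ih, pow_add, pow_succ]
    ring

lemma DL_append_eq (t : List ℕ) (a : ℕ) : DL (t ++ [a]) = DL (a :: t) := by
  unfold DL
  simp [List.sum_append, Nat.add_comm]

lemma T_xL_cons (a : ℕ) (t : List ℕ) (ha : a = 0 ∨ a = 1) :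
    T (xL (a :: t)) = xL (t ++ [a]) := by
  have hlen : 1 ≤ (a :: t).length := by simp
  have hD : ((DL (a :: t) : ℚ)) ≠ 0 := DLQ_ne_zero _ hlen
  rcases ha with rfl | rfl
  · have heven : Even (xL (0 :: t)).num := (even_num_xL 0 t).mpr Even.zero
    rw [T_apply_even _ heven, xL_eq, xL_eq, DL_append_eq]
    have hr1 : rhoL (0 :: t) = 2 * rhoL t := by simp [rhoL]
    have hr2 : rhoL (t ++ [0]) = rhoL t := by rw [rhoL_append]; simp
    rw [hr1, hr2]
    push_cast
    field_simp
  · have hodd : ¬ Even (xL (1 :: t)).num := by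
      rw [even_num_xL]; decide
    rw [T_apply_odd _ hodd, xL_eq, xL_eq, DL_append_eq]
    have hr1 : (rhoL (1 :: t) : ℚ) = 3 ^ t.sum + 2 * rhoL t := by
      show ((1 * 3 ^ t.sum + 2 * rhoL t : ℕ) : ℚ) = _
      push_cast; ring
    have hr2 : (rhoL (t ++ [1]) : ℚ) = 3 * rhoL t + 2 ^ t.length := by
      rw [rhoL_append]; push_cast; ring
    have hDval : ((DL (1 :: t) : ℤ) : ℚ) = 2 * 2 ^ t.length - 3 * 3 ^ t.sum := by
      unfold DL
      push_cast [List.sum_cons, List.length_cons, pow_succ]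
      ring
    rw [hr1, hr2, hDval]
    rw [hDval] at hD
    field_simp
    ring

noncomputable def bitQ (x : ℚ) : ℕ := if Even x.num then 0 else 1

noncomputable def pvec (x : ℚ) : ℕ → List ℕ
  | 0 => []
  | n+1 => bitQ x :: pvec (T x) n

lemma pvec_length (x : ℚ) (n : ℕ) : (pvec x n).length = n := by
  induction n generalizing x with
  | zero => rfl
  | succ n ih => simp [pvec, ih]

lemma pvec_mem (x : ℚ) (n : ℕ) : ∀ a ∈ pvec x n, a = 0 ∨ a = 1 := by
  induction n generalizing x with
  | zero => simp [pvec]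
  | succ n ih =>
    intro a ha
    simp only [pvec, List.mem_cons] at ha
    rcases ha with rfl | ha
    · unfold bitQ; split <;> simp
    · exact ih _ a ha

lemma pvec_snoc (x : ℚ) (n : ℕ) : pvec x (n+1) = pvec x n ++ [bitQ (T^[n] x)] := by
  induction n generalizing x with
  | zero => simp [pvec]
  | succ n ih =>
    calc pvec x (n+1+1) = bitQ x :: pvec (T x) (n+1) := rfl
    _ = bitQ x :: (pvec (T x) n ++ [bitQ (T^[n] (T x))]) := by rw [ih]
    _ = pvec x (n+1) ++ [bitQ (T^[n+1] x)] := by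
        rw [Function.iterate_succ_apply]
        rfl

lemma iter_pvec (v : List ℕ) : ∀ z : ℚ, pvec z v.length = v →
    T^[v.length] z = ((3:ℚ) ^ v.sum * z + rhoL v) / 2 ^ v.length := by
  induction v with
  | nil => intro z _; simp [rhoL]
  | cons a t ih =>
    intro z hz
    have hz0 : pvec z (t.length + 1) = a :: t := hz
    rw [show pvec z (t.length + 1) = bitQ z :: pvec (T z) t.length from rfl] at hz0
    have hb : bitQ z = a := (List.cons.injEq _ _ _ _ ▸ hz0).1
    have ht : pvec (T z) t.length = t := (List.cons.injEq _ _ _ _ ▸ hz0).2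
    have hiter := ih (T z) ht
    rw [List.length_cons, Function.iterate_succ_apply, hiter]
    by_cases h : Even z.num
    · have ha : a = 0 := by rw [← hb]; unfold bitQ; simp [h]
      subst ha
      rw [T_apply_even z h]
      have : (rhoL (0 :: t) : ℚ) = 2 * rhoL t := by
        show ((0 * 3 ^ t.sum + 2 * rhoL t : ℕ) : ℚ) = _
        push_cast; ring
      rw [this, List.sum_cons]
      simp only [Nat.zero_add, pow_succ]
      field_simp
    · have ha : a = 1 := by rw [← hb]; unfold bitQ; simp [h]
      subst ha
      rw [T_apply_odd z h]
      have : (rhoL (1 :: t) : ℚ) = 3 ^ t.sum + 2 * rhoL t := by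
        show ((1 * 3 ^ t.sum + 2 * rhoL t : ℕ) : ℚ) = _
        push_cast; ring
      rw [this, List.sum_cons]
      have hsum : (3:ℚ) ^ (1 + t.sum) = 3 * 3 ^ t.sum := by rw [pow_add, pow_one]
      rw [hsum, pow_succ]
      field_simp
      ring

lemma eq_xL (z : ℚ) (n : ℕ) (hn : 1 ≤ n) (hz : T^[n] z = z) : z = xL (pvec z n) := by
  set v := pvec z n with hv
  have hlen : v.length = n := pvec_length z n
  have h1 : pvec z v.length = v := by rw [hlen]
  have h2 := iter_pvec v z h1
  rw [hlen, hz] at h2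
  have hlen1 : 1 ≤ v.length := by omega
  have hD : ((DL v : ℚ)) ≠ 0 := DLQ_ne_zero v hlen1
  have hDdef : (DL v : ℚ) = 2 ^ n - 3 ^ v.sum := by
    unfold DL; push_cast; rw [hlen]
  rw [xL_eq, hDdef]
  rw [hDdef] at hD
  have h2n : (2:ℚ) ^ n ≠ 0 := by positivity
  field_simp at h2 ⊢
  linear_combination h2

lemma bitQ_xL (a : ℕ) (t : List ℕ) (ha : a = 0 ∨ a = 1) : bitQ (xL (a :: t)) = a := by
  unfold bitQ
  rcases ha with rfl | rfl
  · simp [even_num_xL]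
  · have : ¬ Even (xL (1 :: t)).num := by rw [even_num_xL]; decide
    simp [this]

lemma T_iter_xL (l : List ℕ) (h01 : ∀ a ∈ l, a = 0 ∨ a = 1) (hlen : 1 ≤ l.length)
    (j : ℕ) : T^[j] (xL l) = xL (l.rotate j) := by
  induction j with
  | zero => simp
  | succ j ih =>
    rw [Function.iterate_succ_apply', ih]
    obtain ⟨a, t, hrot⟩ : ∃ a t, l.rotate j = a :: t := by
      cases h : l.rotate j with
      | nil => exfalso; have := List.length_rotate l j; rw [h] at this; simp at this; omega
      | cons a t => exact ⟨a, t, rfl⟩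
    have ha : a = 0 ∨ a = 1 := by
      apply h01
      have : a ∈ l.rotate j := by rw [hrot]; exact List.mem_cons_self
      rwa [List.mem_rotate] at this
    rw [hrot, T_xL_cons a t ha]
    have : l.rotate (j+1) = t ++ [a] := by
      rw [← List.rotate_rotate, hrot, List.rotate_cons_succ, List.rotate_zero]
    rw [this]

lemma pvec_xL (l : List ℕ) (h01 : ∀ a ∈ l, a = 0 ∨ a = 1) (hlen : 1 ≤ l.length) :
    pvec (xL l) l.length = l := by
  suffices h : ∀ m, m ≤ l.length → pvec (xL l) m = l.take m by
    have := h l.length le_rfl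
    rwa [List.take_length] at this
  intro m
  induction m with
  | zero => intro _; rfl
  | succ m ih =>
    intro hm
    have hmlt : m < l.length := hm
    rw [pvec_snoc, ih (le_of_lt hmlt), T_iter_xL l h01 hlen m]
    obtain ⟨a, t, hrot⟩ : ∃ a t, l.rotate m = a :: t := by
      cases h : l.rotate m with
      | nil => exfalso; have := List.length_rotate l m; rw [h] at this; simp at this; omega
      | cons a t => exact ⟨a, t, rfl⟩
    have ha : a = 0 ∨ a = 1 := by
      apply h01
      have : a ∈ l.rotate m := by rw [hrot]; exact List.mem_cons_self
      rwa [List.mem_rotate] at this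
    have hget : a = l[m] := by
      have h1 := List.head?_rotate hmlt
      rw [hrot] at h1
      simp only [List.head?_cons] at h1
      have h2 : l[m]? = some l[m] := List.getElem?_eq_getElem hmlt
      rw [h2] at h1
      exact (Option.some.injEq _ _ ▸ h1)
    rw [hrot, bitQ_xL a t ha, hget]
    exact List.take_concat_get' l m hmlt

lemma den_div_nat (q : ℤ) (k : ℕ) (hk : 0 < k) (hcop : Nat.Coprime q.natAbs k) :
    ((q : ℚ) / (k : ℚ)).den = k := by
  have hb : (0:ℤ) < (k:ℤ) := by exact_mod_cast hk
  have h := Rat.den_div_eq_of_coprime hb (by simpa using hcop)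
  have h2 : (((q : ℚ) / ((k:ℤ) : ℚ)).den : ℤ) = (k : ℤ) := h
  push_cast at h2
  exact_mod_cast h2

lemma natAbs_coprime_of_gcd (q : ℤ) (k : ℕ) (h : Int.gcd q (k:ℤ) = 1) :
    Nat.Coprime q.natAbs k := by
  unfold Nat.Coprime
  simpa [Int.gcd] using h

lemma T_den (k : ℕ) (hk : 0 < k) (hk2 : ¬ 2 ∣ k) (hk3 : ¬ 3 ∣ k) (x : ℚ)
    (hx : x.den = k) : (T x).den = k := by
  have hxe : x = (x.num : ℚ) / (k : ℚ) := by rw [← hx]; exact (Rat.num_div_den x).symm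
  have hcop : Nat.Coprime x.num.natAbs k := hx ▸ x.reduced
  have hkQ : (k:ℚ) ≠ 0 := Nat.cast_ne_zero.mpr hk.ne'
  by_cases h : Even x.num
  · rw [T_apply_even x h]
    obtain ⟨q, hq⟩ := h
    have hval : x / 2 = (q : ℚ) / (k : ℚ) := by
      rw [hxe, hq]; push_cast; field_simp; ring
    rw [hval]
    apply den_div_nat q k hk
    apply Nat.Coprime.coprime_dvd_left _ hcop
    exact Int.natAbs_dvd_natAbs.mpr ⟨2, by omega⟩
  · rw [T_apply_odd x h]
    have hodd : Odd x.num := Int.not_even_iff_odd.mp h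
    have hkodd : Odd (k:ℤ) := by
      rcases Int.even_or_odd (k:ℤ) with he | ho
      · exfalso
        apply hk2
        have : (2:ℤ) ∣ (k:ℤ) := he.two_dvd
        exact_mod_cast this
      · exact ho
    have heven : Even (3 * x.num + (k:ℤ)) := by
      have : Odd (3 * x.num) := (by decide : Odd (3:ℤ)).mul hodd
      exact this.add_odd hkodd
    obtain ⟨q, hq⟩ := heven
    have hval : (3 * x + 1) / 2 = (q : ℚ) / (k : ℚ) := by
      rw [hxe]
      have hcast : (3 : ℚ) * x.num + k = q + q := by exact_mod_cast congrArg (fun z : ℤ => (z : ℚ)) hq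
      field_simp
      linear_combination hcast
    rw [hval]
    apply den_div_nat q k hk
    -- coprimality of q and k
    have hq_dvd : q ∣ 3 * x.num + (k:ℤ) := ⟨2, by omega⟩
    apply Nat.Coprime.coprime_dvd_left (Int.natAbs_dvd_natAbs.mpr hq_dvd)
    apply natAbs_coprime_of_gcd
    rw [← Int.isCoprime_iff_gcd_eq_one]
    have h3 : IsCoprime (3:ℤ) (k:ℤ) := by
      rw [Int.isCoprime_iff_gcd_eq_one]
      have : Nat.Coprime 3 k := (Nat.prime_three.coprime_iff_not_dvd).mpr hk3
      simpa [Int.gcd] using this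
    have hp : IsCoprime (x.num) (k:ℤ) := by
      rw [Int.isCoprime_iff_gcd_eq_one]
      simpa [Int.gcd] using hcop
    have h3p : IsCoprime (3 * x.num) (k:ℤ) := h3.mul_left hp
    have := h3p.add_mul_right_left 1
    simpa using this

def orbitT (x : ℚ) : Set ℚ := {y | ∃ j : ℕ, T^[j] x = y}

lemma mem_orbit_self (x : ℚ) : x ∈ orbitT x := ⟨0, rfl⟩

lemma orbit_subset_of_mem {x y : ℚ} (h : y ∈ orbitT x) : orbitT y ⊆ orbitT x := by
  obtain ⟨j, rfl⟩ := h
  rintro z ⟨i, rfl⟩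
  exact ⟨i + j, by rw [Function.iterate_add_apply]⟩

lemma mem_orbit_of_periodic {x y : ℚ} {n : ℕ} (hn : 1 ≤ n) (hp : T^[n] x = x)
    (h : y ∈ orbitT x) : x ∈ orbitT y := by
  obtain ⟨j, rfl⟩ := h
  refine ⟨n * j - j, ?_⟩
  rw [← Function.iterate_add_apply]
  have hj : j ≤ n * j := Nat.le_mul_of_pos_left j (by omega)
  rw [Nat.sub_add_cancel hj]
  have hper : Function.IsPeriodicPt T n x := hp
  exact hper.mul_const j

lemma orbit_eq_of_mem {x y : ℚ} {n : ℕ} (hn : 1 ≤ n) (hp : T^[n] x = x)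
    (h : y ∈ orbitT x) : orbitT y = orbitT x :=
  Set.Subset.antisymm (orbit_subset_of_mem h)
    (orbit_subset_of_mem (mem_orbit_of_periodic hn hp h))

lemma orbit_den (k : ℕ) (hk : 0 < k) (hk2 : ¬ 2 ∣ k) (hk3 : ¬ 3 ∣ k) (x : ℚ)
    (hx : x.den = k) : ∀ y ∈ orbitT x, y.den = k := by
  rintro y ⟨j, rfl⟩
  induction j with
  | zero => exact hx
  | succ j ih =>
    rw [Function.iterate_succ_apply']
    exact T_den k hk hk2 hk3 _ ih

lemma orbit_eq_image (x : ℚ) (hx : x ∈ Function.periodicPts T) :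
    orbitT x = (fun j => T^[j] x) '' Set.Iio (Function.minimalPeriod T x) := by
  have hn : 0 < Function.minimalPeriod T x :=
    Function.minimalPeriod_pos_of_mem_periodicPts hx
  ext y
  constructor
  · rintro ⟨j, rfl⟩
    exact ⟨j % _, Nat.mod_lt _ hn,
      (Function.isPeriodicPt_minimalPeriod T x).iterate_mod_apply j⟩
  · rintro ⟨j, _, rfl⟩
    exact ⟨j, rfl⟩

lemma orbit_finite (x : ℚ) (hx : x ∈ Function.periodicPts T) : (orbitT x).Finite := by
  rw [orbit_eq_image x hx]
  exact (Set.finite_Iio _).image _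

lemma orbit_ncard (x : ℚ) (hx : x ∈ Function.periodicPts T) :
    (orbitT x).ncard = Function.minimalPeriod T x := by
  rw [orbit_eq_image x hx,
    Set.ncard_image_of_injOn Function.iterate_injOn_Iio_minimalPeriod]
  rw [← Finset.coe_Iio, Set.ncard_coe_finset, Nat.card_Iio]

lemma ncard_disjoint_biUnion {α β : Type*} (s : Finset β) (f : β → Set α)
    (hf : ∀ b ∈ s, (f b).Finite)
    (hd : ∀ b ∈ s, ∀ b' ∈ s, b ≠ b' → Disjoint (f b) (f b')) :
    (⋃ b ∈ s, f b).ncard = ∑ b ∈ s, (f b).ncard := by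
  classical
  induction s using Finset.induction with
  | empty => simp
  | @insert a s ha ih =>
    rw [Finset.set_biUnion_insert, Finset.sum_insert ha]
    have hfin1 : (f a).Finite := hf a (Finset.mem_insert_self a s)
    have hfin2 : (⋃ b ∈ s, f b).Finite :=
      Set.Finite.biUnion s.finite_toSet (fun b hb => hf b (Finset.mem_insert_of_mem hb))
    have hdisj : Disjoint (f a) (⋃ b ∈ s, f b) := by
      rw [Set.disjoint_left]
      intro x hxa hxu
      simp only [Set.mem_iUnion] at hxu
      obtain ⟨b, hb, hxb⟩ := hxu
      have hne : a ≠ b := by rintro rfl; exact ha hb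
      exact Set.disjoint_left.mp
        (hd a (Finset.mem_insert_self a s) b (Finset.mem_insert_of_mem hb) hne) hxa hxb
    rw [Set.ncard_union_eq hdisj hfin1 hfin2]
    rw [ih (fun b hb => hf b (Finset.mem_insert_of_mem hb))
      (fun b hb b' hb' => hd b (Finset.mem_insert_of_mem hb) b' (Finset.mem_insert_of_mem hb'))]

end Aux

/-- Proposition 3.1, claim 4: if the set of `T`-cycles contained in `D_k` is finite
with cardinality `α(k)`, then `α(k) = ∑_{n≥1} ν_n(k)/n`, where each term is a
nonnegative integer and only finitely many terms are nonzero. -/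
theorem stmt_11 (k : ℕ) (hk : 0 < k) (h6 : Nat.gcd k 6 = 1)
    (hfin : (cyclesIn k).Finite) :
    (∀ n, 1 ≤ n → n ∣ nu n k) ∧
    ∃ N : ℕ, (∀ n, N < n → nu n k = 0) ∧
      (cyclesIn k).ncard = ∑ n ∈ Finset.Icc 1 N, nu n k / n := by
  classical
  have hk2 : ¬ 2 ∣ k := by
    intro h
    have h2 := Nat.dvd_gcd h (by norm_num : (2:ℕ) ∣ 6)
    rw [h6] at h2
    exact absurd (Nat.le_of_dvd one_pos h2) (by omega)
  have hk3 : ¬ 3 ∣ k := by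
    intro h
    have h2 := Nat.dvd_gcd h (by norm_num : (3:ℕ) ∣ 6)
    rw [h6] at h2
    exact absurd (Nat.le_of_dvd one_pos h2) (by omega)
  have hcyc : ∀ c ∈ cyclesIn k, ∃ x : ℚ, x ∈ c ∧ x.den = k ∧
      x ∈ Function.periodicPts T ∧ c = orbitT x := by
    rintro c ⟨x, n, hn, hden, hper, rfl⟩
    exact ⟨x, mem_orbit_self x, hden,
      Function.mk_mem_periodicPts (by omega) hper, rfl⟩
  set per : Set ℚ → ℕ :=
    fun c => if h : c.Nonempty then Function.minimalPeriod T h.some else 0 with hper_def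
  have hper_eq : ∀ c ∈ cyclesIn k, ∀ y ∈ c, Function.minimalPeriod T y = per c := by
    intro c hc y hy
    obtain ⟨x, hxc, hdenx, hxp, rfl⟩ := hcyc c hc
    have key : ∀ z ∈ orbitT x,
        Function.minimalPeriod T z = Function.minimalPeriod T x := by
      rintro z ⟨j, rfl⟩
      exact Function.minimalPeriod_apply_iterate hxp j
    have hne : (orbitT x).Nonempty := ⟨x, mem_orbit_self x⟩
    simp only [hper_def, dif_pos hne]
    rw [key y hy, key hne.some hne.some_mem]
  have hper_pos : ∀ c ∈ cyclesIn k, 1 ≤ per c := by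
    intro c hc
    obtain ⟨x, hxc, _, hxp, _⟩ := hcyc c hc
    have hpos := Function.minimalPeriod_pos_of_mem_periodicPts hxp
    rw [hper_eq c hc x hxc] at hpos
    omega
  have hden_all : ∀ c ∈ cyclesIn k, ∀ y ∈ c, y.den = k := by
    intro c hc y hy
    obtain ⟨x, hxc, hdenx, hxp, rfl⟩ := hcyc c hc
    exact orbit_den k hk hk2 hk3 x hdenx y hy
  have hcard : ∀ c ∈ cyclesIn k, c.ncard = per c := by
    intro c hc
    obtain ⟨x, hxc, _, hxp, rfl⟩ := hcyc c hc
    rw [orbit_ncard x hxp]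
    exact hper_eq _ hc x hxc
  have hcfin : ∀ c ∈ cyclesIn k, c.Finite := by
    intro c hc
    obtain ⟨x, _, _, hxp, rfl⟩ := hcyc c hc
    exact orbit_finite x hxp
  have hdisj : ∀ c ∈ cyclesIn k, ∀ c' ∈ cyclesIn k, c ≠ c' → Disjoint c c' := by
    intro c hc c' hc' hne
    rw [Set.disjoint_left]
    intro y hyc hyc'
    apply hne
    obtain ⟨x, hxc, _, hxp, rfl⟩ := hcyc c hc
    obtain ⟨x', hxc', _, hxp', rfl⟩ := hcyc c' hc'
    have e1 : orbitT y = orbitT x :=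
      orbit_eq_of_mem (Function.minimalPeriod_pos_of_mem_periodicPts hxp)
        (Function.isPeriodicPt_minimalPeriod T x) hyc
    have e2 : orbitT y = orbitT x' :=
      orbit_eq_of_mem (Function.minimalPeriod_pos_of_mem_periodicPts hxp')
        (Function.isPeriodicPt_minimalPeriod T x') hyc'
    rw [← e1, e2]
  have hPts : ∀ m : ℕ, 1 ≤ m →
      {l : List ℕ | l.length = m ∧ (∀ a ∈ l, a = 0 ∨ a = 1) ∧ Primitive l ∧ (xL l).den = k}
        = (fun y => pvec y m) '' {y : ℚ | y.den = k ∧ Function.minimalPeriod T y = m} := by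
    intro m hm
    ext l
    simp only [Set.mem_setOf_eq, Set.mem_image]
    constructor
    · rintro ⟨hlen, h01, hprim, hden⟩
      have hl1 : 1 ≤ l.length := by omega
      have hrotper : T^[m] (xL l) = xL l := by
        conv_lhs => rw [← hlen]
        rw [T_iter_xL l h01 hl1, List.rotate_length]
      have hyper : Function.IsPeriodicPt T m (xL l) := hrotper
      have hxp : xL l ∈ Function.periodicPts T :=
        Function.mk_mem_periodicPts (by omega) hyper
      have hpv : pvec (xL l) m = l := by
        have h := pvec_xL l h01 hl1
        rwa [hlen] at h
      have hdm : Function.minimalPeriod T (xL l) = m := by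
        have hdvd := hyper.minimalPeriod_dvd
        have hd1 : 0 < Function.minimalPeriod T (xL l) :=
          Function.minimalPeriod_pos_of_mem_periodicPts hxp
        by_contra hne
        have hdlt : Function.minimalPeriod T (xL l) < m :=
          lt_of_le_of_ne (Nat.le_of_dvd (by omega) hdvd) hne
        set d := Function.minimalPeriod T (xL l) with hd
        have h1 : xL (l.rotate d) = xL l := by
          rw [← T_iter_xL l h01 hl1 d]
          exact Function.isPeriodicPt_minimalPeriod T (xL l)
        have h2 : pvec (xL (l.rotate d)) m = l.rotate d := by
          have h01' : ∀ a ∈ l.rotate d, a = 0 ∨ a = 1 :=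
            fun a ha => h01 a (List.mem_rotate.mp ha)
          have h := pvec_xL (l.rotate d) h01' (by rw [List.length_rotate]; omega)
          rwa [List.length_rotate, hlen] at h
        rw [h1, hpv] at h2
        exact hprim d (by omega) (by omega) h2.symm
      exact ⟨xL l, ⟨hden, hdm⟩, hpv⟩
    · rintro ⟨y, ⟨hdeny, hmp⟩, rfl⟩
      have hyp2 : T^[m] y = y := by
        have h2 := Function.isPeriodicPt_minimalPeriod T y
        rwa [hmp] at h2
      have hlen : (pvec y m).length = m := pvec_length y m
      have h01 := pvec_mem y m
      have hyeq : y = xL (pvec y m) := eq_xL y m hm hyp2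
      refine ⟨hlen, h01, ?_, by rw [← hyeq]; exact hdeny⟩
      intro d hd1 hdm hrot
      rw [hlen] at hdm
      have hTd : T^[d] y = y := by
        conv_lhs => rw [hyeq]
        rw [T_iter_xL (pvec y m) h01 (by omega) d, hrot, ← hyeq]
      have hdvd : m ∣ d := by
        have hp : Function.IsPeriodicPt T d y := hTd
        have h := hp.minimalPeriod_dvd
        rwa [hmp] at h
      have := Nat.le_of_dvd (by omega) hdvd
      omega
  have hinj : ∀ m : ℕ, 1 ≤ m → Set.InjOn (fun y => pvec y m)
      {y : ℚ | y.den = k ∧ Function.minimalPeriod T y = m} := by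
    intro m hm y hy y' hy' heq
    have h1 : T^[m] y = y := by
      have h := Function.isPeriodicPt_minimalPeriod T y
      rwa [hy.2] at h
    have h1' : T^[m] y' = y' := by
      have h := Function.isPeriodicPt_minimalPeriod T y'
      rwa [hy'.2] at h
    rw [eq_xL y m hm h1, eq_xL y' m hm h1']
    simp only at heq
    rw [heq]
  set F := hfin.toFinset with hFdef
  have hmemF : ∀ c, c ∈ F ↔ c ∈ cyclesIn k := fun c => hfin.mem_toFinset
  have hnu : ∀ m : ℕ, 1 ≤ m →
      nu m k = m * (F.filter (fun c => per c = m)).card := by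
    intro m hm
    have hset : {y : ℚ | y.den = k ∧ Function.minimalPeriod T y = m}
        = ⋃ c ∈ F.filter (fun c => per c = m), c := by
      ext y
      simp only [Set.mem_setOf_eq, Set.mem_iUnion, Finset.mem_filter, exists_prop]
      constructor
      · rintro ⟨hdeny, hmp⟩
        have hyp2 : T^[m] y = y := by
          have h2 := Function.isPeriodicPt_minimalPeriod T y
          rwa [hmp] at h2
        have hcm : orbitT y ∈ cyclesIn k := ⟨y, m, hm, hdeny, hyp2, rfl⟩
        refine ⟨orbitT y, ⟨⟨(hmemF _).mpr hcm, ?_⟩, mem_orbit_self y⟩⟩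
        rw [← hper_eq _ hcm y (mem_orbit_self y), hmp]
      · rintro ⟨c, ⟨⟨hcF, hpc⟩, hyc⟩⟩
        have hc := (hmemF c).mp hcF
        exact ⟨hden_all c hc y hyc, by rw [hper_eq c hc y hyc, hpc]⟩
    unfold nu
    rw [hPts m hm, Set.ncard_image_of_injOn (hinj m hm), hset,
      ncard_disjoint_biUnion _ _
        (fun c hc => hcfin c ((hmemF c).mp (Finset.mem_filter.mp hc).1))
        (fun c hc c' hc' hne => hdisj c ((hmemF c).mp (Finset.mem_filter.mp hc).1)
          c' ((hmemF c').mp (Finset.mem_filter.mp hc').1) hne)]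
    calc ∑ c ∈ F.filter (fun c => per c = m), c.ncard
        = ∑ _c ∈ F.filter (fun c => per c = m), m :=
          Finset.sum_congr rfl (fun c hc => by
            obtain ⟨hcF, hpc⟩ := Finset.mem_filter.mp hc
            rw [hcard c ((hmemF c).mp hcF), hpc])
      _ = m * (F.filter (fun c => per c = m)).card := by
          rw [Finset.sum_const, smul_eq_mul, mul_comm]
  refine ⟨fun n hn => by rw [hnu n hn]; exact Dvd.intro _ rfl, F.sup per, ?_, ?_⟩
  · intro n hn
    rw [hnu n (by omega)]
    have hempty : (F.filter (fun c => per c = n)).card = 0 := by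
      rw [Finset.card_eq_zero, Finset.filter_eq_empty_iff]
      intro c hcF
      have := Finset.le_sup (f := per) hcF
      omega
    rw [hempty, Nat.mul_zero]
  · have hncard : (cyclesIn k).ncard = F.card := Set.ncard_eq_toFinset_card _ hfin
    rw [hncard]
    rw [Finset.card_eq_sum_card_fiberwise
      (f := per) (t := Finset.Icc 1 (F.sup per)) (fun c hcF => by
        rw [Finset.mem_coe, Finset.mem_Icc]
        exact ⟨hper_pos c ((hmemF c).mp hcF), Finset.le_sup hcF⟩)]
    apply Finset.sum_congr rfl
    intro n hn
    have hn1 : 1 ≤ n := (Finset.mem_Icc.mp hn).1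
    rw [hnu n hn1, Nat.mul_div_cancel_left _ (by omega : 0 < n)]
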